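/- Let (m, l) be a morphism of state experiment probability systems from (Σ', Q', μ') to (Σ, Q, μ), i.e. m : Σ' → Σ, l : Q → Q' with μ(α, m(p')) = μ'(l(α), p'), l(Π_i α_i) = Π_i l(α_i), and l(α̃) = (l(α))~. Then l preserves the certainty preorder and equivalence on experiments: α ≤ β in Q implies l(α) ≤ l(β) in Q' restricted to states in the image of m, and α ≈ β implies the induced map n : L → L' on equivalence classes (sending the class of α to the class of l(α)) is well-defined, provided the covariance law holds; moreover for all a ∈ L and p' ∈ Σ': a ∈ ξ(m(p')) if and only if n(a) ∈ ξ'(p'). -/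
import Mathlib


open Set

/-- The operation `V ↦ 1 - V` on subsets of `[0,1]`. -/
def oneMinus (V : Set ℝ) : Set ℝ := {x | x ∈ Set.Icc (0:ℝ) 1 ∧ 1 - x ∈ V}

/-- A state experiment probability system (Aerts): states `S`, yes/no-experiments `Q`,
subset probability `mu`, products of arbitrary families, inverse experiments and a unit. -/
structure SEP (S Q : Type) : Type 1 where
  mu : Q → S → Set ℝ
  mu_sub : ∀ α p, mu α p ⊆ Set.Icc (0:ℝ) 1
  prod : {I : Type} → (I → Q) → Q
  mu_prod : ∀ {I : Type} (α : I → Q) (p : S), mu (prod α) p = ⋃ i, mu (α i) p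
  inv : Q → Q
  inv_inv : ∀ α, inv (inv α) = α
  inv_prod : ∀ {I : Type} (α : I → Q), inv (prod α) = prod (fun i => inv (α i))
  mu_inv : ∀ α p, mu (inv α) p = oneMinus (mu α p)
  tau : Q
  mu_tau : ∀ p, mu tau p = ({1} : Set ℝ)

variable {S Q : Type}

/-- `p ≤ q` on states: every experiment certain in `q` is certain in `p`. -/
def stateLe (E : SEP S Q) (p q : S) : Prop :=
  ∀ γ : Q, E.mu γ q ⊆ ({1} : Set ℝ) → E.mu γ p ⊆ ({1} : Set ℝ)

/-- The certainty preorder on experiments. -/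
def certLe (E : SEP S Q) (α β : Q) : Prop :=
  ∀ r : S, E.mu α r ⊆ ({1} : Set ℝ) → E.mu β r ⊆ ({1} : Set ℝ)

/-- The certainty equivalence on experiments, as a setoid. -/
def certSetoid (E : SEP S Q) : Setoid Q where
  r α β := certLe E α β ∧ certLe E β α
  iseqv := ⟨fun _ => ⟨fun _ h => h, fun _ h => h⟩,
    fun h => ⟨h.2, h.1⟩,
    fun h1 h2 => ⟨fun r h => h2.1 r (h1.1 r h), fun r h => h1.2 r (h2.2 r h)⟩⟩

/-- The quotient set `L` of equivalence classes of experiments. -/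
def Lq (E : SEP S Q) := Quotient (certSetoid E)

noncomputable instance (E : SEP S Q) : Preorder (Lq E) where
  le a b := Quotient.liftOn₂ a b (certLe E)
    (fun _ _ _ _ h1 h2 => propext
      ⟨fun h r hr => h2.1 r (h r (h1.2 r hr)), fun h r hr => h2.2 r (h r (h1.1 r hr))⟩)
  le_refl a := by
    induction a using Quotient.ind
    exact fun r h => h
  le_trans a b c := by
    induction a using Quotient.ind
    induction b using Quotient.ind
    induction c using Quotient.ind
    exact fun h1 h2 r h => h2 r (h1 r h)

noncomputable instance (E : SEP S Q) : PartialOrder (Lq E) where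
  le_antisymm a b := by
    induction a using Quotient.ind
    induction b using Quotient.ind
    exact fun h1 h2 => Quotient.sound ⟨h1, h2⟩

/-- The set of properties (equivalence classes of experiments) actual in state `p`. -/
def xi (E : SEP S Q) (p : S) : Set (Lq E) :=
  {a | ∀ α : Q, Quotient.mk (certSetoid E) α = a → E.mu α p ⊆ ({1} : Set ℝ)}

/-- A morphism of state experiment probability systems preserves the certainty preorder,
induces a well-defined map `n` on the quotient lattices, and satisfies
`a ∈ ξ(m(p')) ↔ n(a) ∈ ξ'(p')`. -/
theorem sep_morphism_induces_sp_morphism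
    {S' Q' : Type} (E : SEP S Q) (E' : SEP S' Q')
    (m : S' → S) (l : Q → Q')
    (hcov : ∀ (α : Q) (p' : S'), E.mu α (m p') = E'.mu (l α) p')
    (hprod : ∀ {I : Type} (α : I → Q), l (E.prod α) = E'.prod (fun i => l (α i)))
    (hinv : ∀ α : Q, l (E.inv α) = E'.inv (l α)) :
    -- l preserves the certainty preorder, restricted to states in the image of m
    (∀ α β : Q, certLe E α β →
      ∀ p' : S', E'.mu (l α) p' ⊆ ({1} : Set ℝ) → E'.mu (l β) p' ⊆ ({1} : Set ℝ)) ∧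
    -- the induced map n on equivalence classes is well defined and covariant for ξ
    ∃ n : Lq E → Lq E',
      (∀ α : Q, n (Quotient.mk (certSetoid E) α) = Quotient.mk (certSetoid E') (l α)) ∧
      (∀ (a : Lq E) (p' : S'), a ∈ xi E (m p') ↔ n a ∈ xi E' p') := by
  have key : ∀ α : Q, ∀ p' : S', E.mu α (m p') ⊆ ({1} : Set ℝ) ↔ E'.mu (l α) p' ⊆ ({1} : Set ℝ) := by
    intro α p'; rw [hcov]
  have pres : ∀ α β : Q, certLe E α β → certLe E' (l α) (l β) := by
    intro α β h r hr
    exact (key β r).1 (h (m r) ((key α r).2 hr))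
  constructor
  · intro α β h p' hp'
    exact pres α β h p' hp'
  · have hll : ∀ α β : Q, (certSetoid E).r α β → (certSetoid E').r (l α) (l β) :=
      fun α β h => ⟨pres α β h.1, pres β α h.2⟩
    refine ⟨Quotient.map l hll, fun α => rfl, ?_⟩
    intro a p'
    induction a using Quotient.ind with
    | _ β =>
      constructor
      · intro ha α' hα'
        have hβ : E.mu β (m p') ⊆ ({1} : Set ℝ) := ha β rfl
        have hα'' : Quotient.mk (certSetoid E') α' = Quotient.mk (certSetoid E') (l β) := hα'
        have hequiv : (certSetoid E').r α' (l β) := Quotient.exact hα''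
        exact hequiv.2 p' ((key β p').1 hβ)
      · intro ha α hα
        have hequiv : (certSetoid E).r β α := Quotient.exact hα.symm
        have : Quotient.mk (certSetoid E') (l α) = Quotient.map l hll (Quotient.mk (certSetoid E) β) := by
          have hr : certLe E' (l α) (l β) ∧ certLe E' (l β) (l α) :=
            ⟨pres α β hequiv.2, pres β α hequiv.1⟩
          exact Quotient.sound hr
        exact (key α p').2 (ha (l α) this)
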